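/- arXiv:1407.6046 — 7 statements merged into one kernel-verified Lean document; each statement's English description precedes it below -/
import Mathlib

section
/- Let G be a finite abelian group with n elementary divisors (i.e., G is isomorphic to a direct sum of n nontrivial cyclic groups of prime power order). Then for every faithful action of G on a finite set S, the base size of the action is at most n. -/
/-- A base for the action of `G` on `S`: a set whose pointwise stabilizer is trivial. -/
def IsBase (G : Type*) {S : Type*} [Group G] [MulAction G S] (B : Set S) : Prop :=
  ∀ g : G, (∀ x ∈ B, g • x = x) → g = 1

/-- The base size: minimal cardinality of a base. -/
noncomputable def baseSize (G S : Type*) [Group G] [MulAction G S] : ℕ :=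
  sInf {n | ∃ B : Finset S, IsBase G (B : Set S) ∧ B.card = n}

section Aux

variable {S : Type*} [Fintype S]

def ptors (G : Type*) [CommGroup G] (p : ℕ) : Subgroup G where
  carrier := {g | g ^ p = 1}
  one_mem' := one_pow p
  mul_mem' := fun {a b} ha hb => by
    simp only [Set.mem_setOf_eq] at *; rw [mul_pow, ha, hb, mul_one]
  inv_mem' := fun {a} ha => by
    simp only [Set.mem_setOf_eq] at *; rw [inv_pow, ha, inv_one]

lemma mem_ptors {G : Type*} [CommGroup G] {p : ℕ} {g : G} : g ∈ ptors G p ↔ g ^ p = 1 := Iff.rfl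

lemma card_ptors_eq (G : Type*) [CommGroup G] (p : ℕ) :
    Nat.card (ptors G p) = Nat.card {g : G // g ^ p = 1} := rfl

lemma exists_prime_pow_one {G : Type*} [Group G] [Finite G] {g : G} (hg : g ≠ 1) :
    ∃ (q : ℕ) (h : G), q.Prime ∧ h ≠ 1 ∧ h ^ q = 1 := by
  set o := orderOf g with ho
  have h1 : o ≠ 1 := by simpa [ho] using hg
  have hopos : 0 < o := orderOf_pos g
  set q := o.minFac with hq
  have hqp : q.Prime := Nat.minFac_prime h1
  have hdvd : q ∣ o := Nat.minFac_dvd o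
  refine ⟨q, g ^ (o / q), hqp, ?_, ?_⟩
  · intro h
    have : o ∣ o / q := orderOf_dvd_of_pow_eq_one h
    have hlt : o / q < o := Nat.div_lt_self hopos hqp.one_lt
    have hpos : 0 < o / q := Nat.div_pos (Nat.le_of_dvd hopos hdvd) hqp.pos
    exact absurd (Nat.le_of_dvd hpos this) (not_le.mpr hlt)
  · rw [← pow_mul, Nat.div_mul_cancel hdvd, pow_orderOf_eq_one]

lemma aux : ∀ (n : ℕ) (G : Type u) [CommGroup G] [Fintype G] [MulAction G S] [FaithfulSMul G S]
    (m : Multiset ℕ), Multiset.card m ≤ n →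
    (∀ p : ℕ, p.Prime → Nat.card {g : G // g ^ p = 1} ≤ p ^ m.count p) →
    ∃ B : Finset S, IsBase G (B : Set S) ∧ B.card ≤ n := by
  intro n
  induction n with
  | zero =>
    intro G _ _ _ _ m hm hbound
    refine ⟨∅, fun g _ => ?_, le_refl 0⟩
    by_contra hg
    obtain ⟨q, h, hq, hne, hpow⟩ := exists_prime_pow_one hg
    have hnt : Nontrivial {g : G // g ^ q = 1} :=
      ⟨⟨⟨h, hpow⟩, ⟨1, one_pow q⟩, by simp [hne]⟩⟩
    have h2 : 1 < Nat.card {g : G // g ^ q = 1} := Finite.one_lt_card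
    have := hbound q hq
    rw [Multiset.card_eq_zero.mp (Nat.le_zero.mp hm)] at this
    simp at this
    omega
  | succ n ih =>
    intro G _ _ _ _ m hm hbound
    classical
    by_cases htriv : ∀ g : G, g = 1
    · exact ⟨∅, fun g _ => htriv g, by simp⟩
    push_neg at htriv
    obtain ⟨g, hg⟩ := htriv
    obtain ⟨q, h, hq, hne, hpow⟩ := exists_prime_pow_one hg
    have hx : ∃ x : S, h • x ≠ x := by
      by_contra hall
      push_neg at hall
      exact hne (FaithfulSMul.eq_of_smul_eq_smul (fun a => by rw [hall a, one_smul]))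
    obtain ⟨x, hx⟩ := hx
    set H := MulAction.stabilizer G x with hH
    have hhH : h ∉ H := fun hmem => hx hmem
    haveI : FaithfulSMul H S := ⟨fun {a b} hab => Subtype.ext
      (FaithfulSMul.eq_of_smul_eq_smul (fun s : S => by
        simpa [Subgroup.smul_def] using hab s))⟩
    -- q has positive count in m
    have hnt : Nontrivial {g : G // g ^ q = 1} :=
      ⟨⟨⟨h, hpow⟩, ⟨1, one_pow q⟩, by simp [hne]⟩⟩
    have h2 : 1 < Nat.card {g : G // g ^ q = 1} := Finite.one_lt_card
    have hcq : 1 ≤ m.count q := by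
      by_contra hc
      have hc0 : m.count q = 0 := by omega
      have hb := hbound q hq
      rw [hc0, pow_zero] at hb
      omega
    have hqm : q ∈ m := Multiset.count_pos.mp (by omega)
    set m' := m.erase q with hm'
    have hm'card : Multiset.card m' ≤ n := by
      rw [hm', Multiset.card_erase_of_mem hqm]
      exact Nat.pred_le_pred hm
    -- bounds for H
    have hbound' : ∀ p : ℕ, p.Prime → Nat.card {a : H // a ^ p = 1} ≤ p ^ m'.count p := by
      intro p hp
      set K := ptors G p with hK
      have hinj : Nat.card {a : H // a ^ p = 1} ≤ Nat.card (K ⊓ H : Subgroup G) := by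
        have hmem : ∀ a : {a : H // a ^ p = 1}, (a.1 : G) ∈ K ⊓ H := by
          intro a
          refine ⟨?_, a.1.2⟩
          show ((a.1 : G)) ^ p = 1
          simpa using congrArg Subtype.val a.2
        refine Nat.card_le_card_of_injective (fun a => ⟨(a.1 : G), hmem a⟩) ?_
        intro a b hab
        simp only [Subtype.mk.injEq] at hab
        exact Subtype.ext (Subtype.ext hab)
      rcases eq_or_ne p q with rfl | hpq
      · -- proper subgroup argument
        haveI : Fact p.Prime := ⟨hp⟩
        have hKp : IsPGroup p K := fun k => ⟨1, by
          apply Subtype.ext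
          rw [pow_one]
          exact k.2⟩
        obtain ⟨s, hs⟩ := hKp.exists_card_eq
        have hdvd : Nat.card (K ⊓ H : Subgroup G) ∣ p ^ s := hs ▸ Subgroup.card_dvd_of_le inf_le_left
        have hne' : (K ⊓ H : Subgroup G) ≠ K := by
          intro he
          exact hhH (((he ▸ (inf_le_right : K ⊓ H ≤ H)) : K ≤ H) (mem_ptors.mpr hpow))
        have hltcard : Nat.card (K ⊓ H : Subgroup G) ≠ p ^ s := by
          intro he
          exact hne' (Subgroup.eq_of_le_of_card_ge inf_le_left (by rw [hs, ← he]))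
        obtain ⟨t, hts, hteq⟩ := (Nat.dvd_prime_pow hp).mp hdvd
        have hts' : t ≤ s - 1 := by
          rcases Nat.lt_or_ge t s with h' | h'
          · omega
          · exfalso; exact hltcard (by rw [hteq]; congr 1; omega)
        have hs1 : 1 ≤ s := by
          by_contra hs0
          have : s = 0 := by omega
          rw [this, pow_zero, card_ptors_eq] at hs
          omega
        have hscount : s ≤ m.count p := by
          have := hbound p hp
          rw [← card_ptors_eq, hs] at this
          exact (Nat.pow_le_pow_iff_right hp.one_lt).mp this
        calc Nat.card {a : H // a ^ p = 1} ≤ p ^ t := hteq ▸ hinj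
          _ ≤ p ^ (m.count p - 1) := Nat.pow_le_pow_right hp.pos (by omega)
          _ = p ^ (m'.count p) := by rw [hm', Multiset.count_erase_self]
      · have hle1 : Nat.card (K ⊓ H : Subgroup G) ≤ Nat.card K :=
          Subgroup.card_le_of_le inf_le_left
        have hle2 : Nat.card K ≤ p ^ m.count p := by
          rw [card_ptors_eq]; exact hbound p hp
        rw [hm', Multiset.count_erase_of_ne hpq]
        exact hinj.trans (hle1.trans hle2)
    haveI : Fintype H := Fintype.ofFinite _
    obtain ⟨B, hB, hBcard⟩ := ih H m' hm'card hbound'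
    refine ⟨insert x B, ?_, ?_⟩
    · intro g hgfix
      have hgx : g • x = x := hgfix x (by simp)
      have hgH : g ∈ H := hgx
      have : (⟨g, hgH⟩ : H) = 1 := by
        apply hB
        intro y hy
        rw [Subgroup.smul_def]
        exact hgfix y (by
          simp only [Finset.coe_insert, Set.mem_insert_iff]
          exact Or.inr hy)
      exact congrArg Subtype.val this
    · exact (Finset.card_insert_le x B).trans (by omega)


end Aux

/-- If `G` is a finite abelian group with `n` elementary divisors, i.e. `G` is isomorphic
to a direct sum of `n` nontrivial cyclic groups of prime power orders `p i ^ α i`, then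
every faithful action of `G` on a finite set `S` has base size at most `n`. -/
theorem stmt6 (G S : Type*) [CommGroup G] [Fintype G] [Fintype S] [MulAction G S]
    [FaithfulSMul G S] (n : ℕ) (p α : Fin n → ℕ) (hp : ∀ i, (p i).Prime)
    (hα : ∀ i, 1 ≤ α i)
    (e : G ≃* ((i : Fin n) → Multiplicative (ZMod (p i ^ α i)))) :
    baseSize G S ≤ n := by
  classical
  haveI : ∀ i, NeZero (p i ^ α i) := fun i => ⟨pow_ne_zero _ (hp i).pos.ne'⟩
  set m : Multiset ℕ := Multiset.map p Finset.univ.val with hm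
  have hmcard : Multiset.card m = n := by simp [hm]
  have hbound : ∀ p' : ℕ, p'.Prime → Nat.card {g : G // g ^ p' = 1} ≤ p' ^ m.count p' := by
    intro p' hp'
    have e1 : {g : G // g ^ p' = 1} ≃ {v : ∀ i, Multiplicative (ZMod (p i ^ α i)) // v ^ p' = 1} :=
      Equiv.subtypeEquiv e.toEquiv (fun g => by
        show g ^ p' = 1 ↔ e g ^ p' = 1
        rw [← map_pow]
        exact ⟨fun hg => by rw [hg, map_one],
          fun hg => e.injective (by rw [hg, map_one])⟩)
    have e2 : {v : ∀ i, Multiplicative (ZMod (p i ^ α i)) // v ^ p' = 1} ≃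
        ∀ i, {z : Multiplicative (ZMod (p i ^ α i)) // z ^ p' = 1} :=
      { toFun := fun v i => ⟨v.1 i, congrFun v.2 i⟩
        invFun := fun f => ⟨fun i => (f i).1, funext fun i => (f i).2⟩
        left_inv := fun v => Subtype.ext rfl
        right_inv := fun f => rfl }
    rw [Nat.card_congr (e1.trans e2), Nat.card_pi]
    have hfac : ∀ i, Nat.card {z : Multiplicative (ZMod (p i ^ α i)) // z ^ p' = 1}
        ≤ if p i = p' then p' else 1 := by
      intro i
      by_cases hip : p i = p'
      · rw [if_pos hip, Nat.card_eq_fintype_card, Fintype.card_subtype]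
        exact IsCyclic.card_pow_eq_one_le hp'.pos
      · rw [if_neg hip]
        have hone : ∀ z : Multiplicative (ZMod (p i ^ α i)), z ^ p' = 1 → z = 1 := by
          intro z hz
          have h1 : orderOf z ∣ p' := orderOf_dvd_of_pow_eq_one hz
          have h2 : orderOf z ∣ p i ^ α i := by
            have := orderOf_dvd_card (x := z)
            simpa [Nat.card_eq_fintype_card, ZMod.card] using this
          have hcop : Nat.Coprime p' (p i ^ α i) :=
            (Nat.coprime_primes hp' (hp i)).mpr (fun he => hip he.symm) |>.pow_right _
          have : orderOf z ∣ 1 := hcop ▸ Nat.dvd_gcd h1 h2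
          rw [orderOf_eq_one_iff.mp (Nat.eq_one_of_dvd_one this)]
        haveI : Subsingleton {z : Multiplicative (ZMod (p i ^ α i)) // z ^ p' = 1} :=
          ⟨fun a b => Subtype.ext (by rw [hone a.1 a.2, hone b.1 b.2])⟩
        exact Finite.card_le_one_iff_subsingleton.mpr inferInstance
    calc ∏ i, Nat.card {z : Multiplicative (ZMod (p i ^ α i)) // z ^ p' = 1}
        ≤ ∏ i, (if p i = p' then p' else 1) := Finset.prod_le_prod' (fun i _ => hfac i)
      _ = p' ^ (Finset.univ.filter (fun i => p i = p')).card := by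
          rw [← Finset.prod_filter, Finset.prod_const]
      _ = p' ^ m.count p' := by
          congr 1
          rw [hm, Multiset.count_map]
          rw [Finset.card, Finset.filter_val]
          exact congrArg Multiset.card
            (Multiset.filter_congr (fun x _ => eq_comm)).symm
  obtain ⟨B, hB, hBcard⟩ := aux (S := S) n G m (le_of_eq hmcard) hbound
  have hmem : B.card ∈ {k | ∃ B' : Finset S, IsBase G (B' : Set S) ∧ B'.card = k} :=
    ⟨B, hB, rfl⟩
  exact (Nat.sInf_le hmem).trans hBcard
end

section
/- For any prime p and positive integer k, every faithful action of the dihedral group D_{p^k} of order 2p^k on a finite set has base size at most 2. -/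
lemma r_pow_aux {n : ℕ} (j : ZMod n) (m : ℕ) :
    (DihedralGroup.r j) ^ m = DihedralGroup.r ((m : ZMod n) * j) := by
  induction m with
  | zero => simp [DihedralGroup.one_def, -DihedralGroup.r_zero]
  | succ m ih =>
    rw [pow_succ, ih, DihedralGroup.r_mul_r]
    congr 1
    push_cast
    ring

lemma exists_mul_aux (p k : ℕ) (hp : p.Prime) (hk : 1 ≤ k) (j : ZMod (p ^ k)) (hj : j ≠ 0) :
    ∃ m : ℕ, (m : ZMod (p ^ k)) * j = ((p ^ (k - 1) : ℕ) : ZMod (p ^ k)) := by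
  haveI : NeZero (p ^ k) := ⟨pow_ne_zero k hp.pos.ne'⟩
  set v := j.val with hv
  have hv0 : v ≠ 0 := by
    simpa [hv, ZMod.val_eq_zero] using hj
  have hvlt : v < p ^ k := ZMod.val_lt j
  set d := Nat.gcd v (p ^ k) with hd
  have hddvd : d ∣ p ^ k := Nat.gcd_dvd_right _ _
  obtain ⟨a, ha, hda⟩ := (Nat.dvd_prime_pow hp).mp hddvd
  have hak : a < k := by
    rcases lt_or_eq_of_le ha with h | h
    · exact h
    · exfalso
      have : d ≤ v := Nat.le_of_dvd (Nat.pos_of_ne_zero hv0) (Nat.gcd_dvd_left _ _)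
      rw [h] at hda
      omega
  have hdk1 : d ∣ p ^ (k - 1) := by
    rw [hda]
    exact pow_dvd_pow p (by omega)
  -- Bezout
  have hbez : (d : ℤ) = v * Nat.gcdA v (p ^ k) + ((p ^ k : ℕ) : ℤ) * Nat.gcdB v (p ^ k) :=
    Nat.gcd_eq_gcd_ab v (p ^ k)
  have hzmod : (d : ZMod (p ^ k)) = (j : ZMod (p ^ k)) * ((Nat.gcdA v (p ^ k) : ℤ) : ZMod (p ^ k)) := by
    have h2 := congrArg (fun z : ℤ => ((z : ZMod (p ^ k)))) hbez
    simp only [Int.cast_add, Int.cast_mul, Int.cast_natCast] at h2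
    rw [ZMod.natCast_self] at h2
    simpa [hv, ZMod.natCast_val, ZMod.cast_id] using h2
  set c : ZMod (p ^ k) := ((p ^ (k - 1) / d : ℕ) : ZMod (p ^ k)) * ((Nat.gcdA v (p ^ k) : ℤ) : ZMod (p ^ k)) with hc
  refine ⟨c.val, ?_⟩
  have hcv : ((c.val : ℕ) : ZMod (p ^ k)) = c := by
    simp [ZMod.natCast_val, ZMod.cast_id]
  rw [hcv, hc]
  have : ((p ^ (k - 1) : ℕ) : ZMod (p ^ k)) = ((p ^ (k - 1) / d : ℕ) : ZMod (p ^ k)) * (d : ZMod (p ^ k)) := by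
    rw [← Nat.cast_mul, Nat.div_mul_cancel hdk1]
  rw [this, hzmod]
  ring

/-- For a prime `p` and `k ≥ 1`, every faithful action of the dihedral group of order
`2 p ^ k` on a finite set has base size at most `2`. -/
theorem stmt8 (S : Type*) [Fintype S] (p k : ℕ) (hp : p.Prime) (hk : 1 ≤ k)
    [MulAction (DihedralGroup (p ^ k)) S] [FaithfulSMul (DihedralGroup (p ^ k)) S] :
    baseSize (DihedralGroup (p ^ k)) S ≤ 2 := by
  classical
  haveI : NeZero (p ^ k) := ⟨pow_ne_zero k hp.pos.ne'⟩
  have hpk1 : ((p ^ (k - 1) : ℕ) : ZMod (p ^ k)) ≠ 0 := by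
    rw [Ne, ZMod.natCast_eq_zero_iff]
    intro hdvd
    have := Nat.le_of_dvd (pow_pos hp.pos _) hdvd
    have h2 := Nat.pow_lt_pow_right hp.one_lt (show k - 1 < k by omega)
    omega
  set h : DihedralGroup (p ^ k) := DihedralGroup.r ((p ^ (k - 1) : ℕ) : ZMod (p ^ k)) with hhdef
  have hh1 : h ≠ 1 := by
    rw [hhdef, DihedralGroup.one_def]
    intro hcon
    exact hpk1 (by injection hcon)
  obtain ⟨x, hx⟩ : ∃ x : S, h • x ≠ x := by
    by_contra hcon
    push_neg at hcon
    exact hh1 (eq_of_smul_eq_smul (fun a => by rw [hcon a, one_smul]))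
  have key : ∀ (g : DihedralGroup (p ^ k)), g • x = x → ∀ m : ℕ, g ^ m • x = x := by
    intro g hg m
    induction m with
    | zero => simp
    | succ m ih => rw [pow_succ, mul_smul, hg, ih]
  have claimA : ∀ j : ZMod (p ^ k), DihedralGroup.r j • x = x → j = 0 := by
    intro j hjx
    by_contra hj
    obtain ⟨m, hm⟩ := exists_mul_aux p k hp hk j hj
    have hhm : h = (DihedralGroup.r j) ^ m := by
      rw [r_pow_aux, hm]
    exact hx (by rw [hhm]; exact key _ hjx m)
  by_cases hB : ∀ g : DihedralGroup (p ^ k), g • x = x → g = 1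
  · have hbase : IsBase (DihedralGroup (p ^ k)) (({x} : Finset S) : Set S) := by
      intro g hg
      exact hB g (hg x (by simp))
    have mem : ({x} : Finset S).card ∈
        {n | ∃ B : Finset S, IsBase (DihedralGroup (p ^ k)) (B : Set S) ∧ B.card = n} :=
      ⟨{x}, hbase, rfl⟩
    exact le_trans (Nat.sInf_le mem) (by simp)
  · push_neg at hB
    obtain ⟨t, htx, ht1⟩ := hB
    obtain ⟨i, rfl⟩ : ∃ i, t = DihedralGroup.sr i := by
      cases t with
      | r j =>
        exfalso
        apply ht1
        rw [claimA j htx, ← DihedralGroup.one_def]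
      | sr i => exact ⟨i, rfl⟩
    obtain ⟨y, hy⟩ : ∃ y : S, DihedralGroup.sr i • y ≠ y := by
      by_contra hcon
      push_neg at hcon
      exact ht1 (eq_of_smul_eq_smul (fun a => by rw [hcon a, one_smul]))
    have hbase : IsBase (DihedralGroup (p ^ k)) (({x, y} : Finset S) : Set S) := by
      intro g hg
      have hgx : g • x = x := hg x (by simp)
      have hgy : g • y = y := hg y (by simp)
      cases g with
      | r j => rw [claimA j hgx, ← DihedralGroup.one_def]
      | sr i' =>
        exfalso
        have hcomb : (DihedralGroup.sr i' * DihedralGroup.sr i) • x = x := by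
          rw [mul_smul, htx, hgx]
        rw [DihedralGroup.sr_mul_sr] at hcomb
        have hii : i - i' = 0 := claimA _ hcomb
        have hii2 : i = i' := sub_eq_zero.mp hii
        subst hii2
        exact hy hgy
    have mem : ({x, y} : Finset S).card ∈
        {n | ∃ B : Finset S, IsBase (DihedralGroup (p ^ k)) (B : Set S) ∧ B.card = n} :=
      ⟨{x, y}, hbase, rfl⟩
    have hcard : ({x, y} : Finset S).card ≤ 2 := by
      refine le_trans (Finset.card_insert_le _ _) ?_
      simp
    exact le_trans (Nat.sInf_le mem) hcard
end

section
/- For any odd prime p and positive integer k, every faithful action of the dihedral group D_{2p^k} of order 4p^k on a finite set has base size at most 3. -/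
namespace Stmt9Aux

open DihedralGroup

/-- rotations as a hom. -/
def rHom (n : ℕ) : Multiplicative (ZMod n) →* DihedralGroup n where
  toFun j := DihedralGroup.r j.toAdd
  map_one' := rfl
  map_mul' := fun _ _ => (DihedralGroup.r_mul_r _ _).symm

lemma r_zpow (n : ℕ) (i : ZMod n) (s : ℤ) :
    (DihedralGroup.r i) ^ s = DihedralGroup.r ((s : ZMod n) * i) := by
  have h := (rHom n).map_zpow (Multiplicative.ofAdd i) s
  have h' : (rHom n) (Multiplicative.ofAdd i) = DihedralGroup.r i := rfl
  have h'' : (rHom n) (Multiplicative.ofAdd i ^ s) = DihedralGroup.r ((s : ZMod n) * i) := by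
    show DihedralGroup.r (Multiplicative.toAdd (Multiplicative.ofAdd i ^ s)) = _
    rw [toAdd_zpow, toAdd_ofAdd, zsmul_eq_mul]
  rw [← h', ← h'', h]

lemma gcd_dvd (p k v : ℕ) (hp : p.Prime) (hv0 : v ≠ 0) (hvlt : v < 2 * p ^ k)
    (hvpk : v ≠ p ^ k) : Nat.gcd v (2 * p ^ k) ∣ 2 * p ^ (k - 1) := by
  set d := Nat.gcd v (2 * p ^ k) with hd
  have hdvd : d ∣ 2 * p ^ k := Nat.gcd_dvd_right _ _
  have hdv : d ∣ v := Nat.gcd_dvd_left _ _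
  obtain ⟨j, hj, hjq⟩ := (Nat.dvd_prime_pow hp).mp (Nat.gcd_dvd_right d (p ^ k))
  have hjk : j ≤ k - 1 := by
    rcases Nat.lt_or_ge j k with h | h
    · omega
    · exfalso
      have hk : j = k := le_antisymm hj h
      have hpk : p ^ k ∣ v := by
        have h2 : p ^ k ∣ d := by
          rw [← hk, ← hjq]; exact Nat.gcd_dvd_left d (p ^ k)
        exact h2.trans hdv
      obtain ⟨c, hc⟩ := hpk
      have hp1 : 1 < p := hp.one_lt
      have hpk0 : 0 < p ^ k := Nat.pow_pos hp.pos
      have hc2 : c < 2 := by nlinarith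
      interval_cases c <;> omega
  have h1 : d ∣ Nat.gcd d 2 * Nat.gcd d (p ^ k) :=
    Nat.dvd_gcd_mul_gcd_iff_dvd_mul.mpr hdvd
  refine h1.trans (mul_dvd_mul (Nat.gcd_dvd_right d 2) ?_)
  rw [hjq]
  exact pow_dvd_pow p hjk

end Stmt9Aux

namespace Stmt9Aux
open DihedralGroup

lemma exists_zpow (p k : ℕ) (hp : p.Prime) (hk : 1 ≤ k)
    (i : ZMod (2 * p ^ k)) (hi0 : i ≠ 0) (hipk : i ≠ ((p ^ k : ℕ) : ZMod (2 * p ^ k))) :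
    ∃ s : ℤ, (DihedralGroup.r i) ^ s
      = DihedralGroup.r (((2 * p ^ (k - 1) : ℕ) : ZMod (2 * p ^ k))) := by
  haveI : NeZero (2 * p ^ k) := ⟨Nat.mul_ne_zero two_ne_zero (pow_ne_zero _ hp.pos.ne')⟩
  set v := i.val with hv
  have hvi : (v : ZMod (2 * p ^ k)) = i := ZMod.natCast_zmod_val i
  have hv0 : v ≠ 0 := fun h => hi0 (by rw [← hvi, h, Nat.cast_zero])
  have hvlt : v < 2 * p ^ k := ZMod.val_lt i
  have hvpk : v ≠ p ^ k := fun h => hipk (by rw [← hvi, h])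
  obtain ⟨m, hm⟩ := gcd_dvd p k v hp hv0 hvlt hvpk
  refine ⟨Nat.gcdA v (2 * p ^ k) * m, ?_⟩
  rw [r_zpow]
  congr 1
  have hZ : ((2 * p ^ (k - 1) : ℕ) : ℤ)
      = (v : ℤ) * (Nat.gcdA v (2 * p ^ k) * m)
        + ((2 * p ^ k : ℕ) : ℤ) * (Nat.gcdB v (2 * p ^ k) * m) := by
    rw [hm]
    push_cast
    rw [Nat.gcd_eq_gcd_ab]
    push_cast
    ring
  have h2 := congrArg (fun z : ℤ => (z : ZMod (2 * p ^ k))) hZ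
  simp only [Int.cast_add, Int.cast_mul, Int.cast_natCast, ZMod.natCast_self,
    zero_mul, add_zero] at h2
  rw [← hvi, h2]
  push_cast
  ring

end Stmt9Aux

namespace Stmt9Aux
open DihedralGroup

variable {p k : ℕ} {S : Type*} [MulAction (DihedralGroup (2 * p ^ k)) S]

lemma rot_stab (hp : p.Prime) (hk : 1 ≤ k) (x : S)
    (hz : ¬ (DihedralGroup.r (((2 * p ^ (k - 1) : ℕ) : ZMod (2 * p ^ k))) • x = x))
    {j : ZMod (2 * p ^ k)} (hj : DihedralGroup.r j • x = x) :
    j = 0 ∨ j = ((p ^ k : ℕ) : ZMod (2 * p ^ k)) := by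
  by_contra hcon
  push_neg at hcon
  obtain ⟨s, hs⟩ := exists_zpow p k hp hk j hcon.1 hcon.2
  apply hz
  have hmem : DihedralGroup.r j ∈ MulAction.stabilizer (DihedralGroup (2 * p ^ k)) x :=
    MulAction.mem_stabilizer_iff.mpr hj
  have h2 := (MulAction.stabilizer (DihedralGroup (2 * p ^ k)) x).zpow_mem hmem s
  rw [hs] at h2
  exact MulAction.mem_stabilizer_iff.mp h2

lemma struct (hp : p.Prime) (hk : 1 ≤ k) (x : S)
    (hz : ¬ (DihedralGroup.r (((2 * p ^ (k - 1) : ℕ) : ZMod (2 * p ^ k))) • x = x))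
    (u h g : DihedralGroup (2 * p ^ k)) (hu : u • x = x) (hh : h • x = x) (hg : g • x = x)
    (hu1 : u ≠ 1) (hh1 : h ≠ 1) (huh : u ≠ h) :
    g = 1 ∨ g = u ∨ g = h ∨ g = u * h := by
  set π : ZMod (2 * p ^ k) := ((p ^ k : ℕ) : ZMod (2 * p ^ k)) with hπ
  have hππ : π + π = 0 := by
    rw [hπ, ← Nat.cast_add, show p ^ k + p ^ k = 2 * p ^ k by ring, ZMod.natCast_self]
  have hnegπ : -π = π := by
    rw [neg_eq_iff_add_eq_zero, hππ]
  have rotA : ∀ j : ZMod (2 * p ^ k), DihedralGroup.r j • x = x → j = 0 ∨ j = π :=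
    fun _ hj => rot_stab hp hk x hz hj
  have reflB : ∀ a b : ZMod (2 * p ^ k), DihedralGroup.sr a • x = x →
      DihedralGroup.sr b • x = x → b = a ∨ b = a + π := by
    intro a b ha hb
    have hc : (DihedralGroup.sr a * DihedralGroup.sr b) • x = x := by
      rw [mul_smul, hb, ha]
    rw [sr_mul_sr] at hc
    rcases rotA _ hc with h0 | h0
    · exact Or.inl (sub_eq_zero.mp h0)
    · right
      rw [sub_eq_iff_eq_add] at h0
      rw [h0, add_comm]
  rcases g with c | c
  · rcases rotA c hg with h0 | h0
    · left; rw [h0, ← one_def]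
    · subst h0
      rcases u with a | a
      · rcases rotA a hu with ha | ha
        · exact absurd (by rw [ha, ← one_def]) hu1
        · right; left; rw [ha]
      · rcases h with b | b
        · rcases rotA b hh with hb | hb
          · exact absurd (by rw [hb, ← one_def]) hh1
          · right; right; left; rw [hb]
        · rcases reflB a b hu hh with hb | hb
          · exact absurd (congrArg DihedralGroup.sr hb).symm huh
          · right; right; right
            rw [sr_mul_sr, hb, add_sub_cancel_left]
  · rcases u with a | a
    · rcases rotA a hu with ha | ha
      · exact absurd (by rw [ha, ← one_def]) hu1
      · rcases h with b | b
        · rcases rotA b hh with hb | hb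
          · exact absurd (by rw [hb, ← one_def]) hh1
          · exact absurd (by rw [ha, hb]) huh
        · rcases reflB b c hh hg with hc | hc
          · right; right; left; rw [hc]
          · right; right; right
            rw [ha, hc, r_mul_sr, sub_eq_add_neg, hnegπ]
    · rcases h with b | b
      · rcases rotA b hh with hb | hb
        · exact absurd (by rw [hb, ← one_def]) hh1
        · rcases reflB a c hu hg with hc | hc
          · right; left; rw [hc]
          · right; right; right
            rw [hb, hc, sr_mul_r]
      · rcases reflB a c hu hg with hc | hc
        · right; left; rw [hc]
        · rcases reflB a b hu hh with hb | hb
          · exact absurd (congrArg DihedralGroup.sr hb).symm huh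
          · right; right; left; rw [hc, hb]

end Stmt9Aux

open DihedralGroup Stmt9Aux in
/-- For an odd prime `p` and `k ≥ 1`, every faithful action of the dihedral group of order
`4 p ^ k` on a finite set has base size at most `3`. -/
theorem stmt9 (S : Type*) [Fintype S] (p k : ℕ) (hp : p.Prime) (hodd : Odd p)
    (hk : 1 ≤ k)
    [MulAction (DihedralGroup (2 * p ^ k)) S]
    [FaithfulSMul (DihedralGroup (2 * p ^ k)) S] :
    baseSize (DihedralGroup (2 * p ^ k)) S ≤ 3 := by
  classical
  have baseSize_le : ∀ B : Finset S, IsBase (DihedralGroup (2 * p ^ k)) (B : Set S) →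
      B.card ≤ 3 → baseSize (DihedralGroup (2 * p ^ k)) S ≤ 3 := by
    intro B hB hc
    exact le_trans (Nat.sInf_le ⟨B, hB, rfl⟩) hc
  set z : DihedralGroup (2 * p ^ k) :=
    DihedralGroup.r (((2 * p ^ (k - 1) : ℕ) : ZMod (2 * p ^ k))) with hzdef
  have hz1 : z ≠ 1 := by
    rw [hzdef, one_def]
    intro hc
    injection hc with hc
    rw [ZMod.natCast_eq_zero_iff] at hc
    have hlt : 2 * p ^ (k - 1) < 2 * p ^ k :=
      (Nat.mul_lt_mul_left two_pos).mpr (Nat.pow_lt_pow_right hp.one_lt (by omega))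
    have hpos : 0 < 2 * p ^ (k - 1) := Nat.mul_pos two_pos (Nat.pow_pos hp.pos)
    have := Nat.le_of_dvd hpos hc
    omega
  have exists_moved : ∀ g : DihedralGroup (2 * p ^ k), g ≠ 1 → ∃ y : S, ¬ g • y = y := by
    intro g hg
    by_contra hcon
    push_neg at hcon
    exact hg (eq_of_smul_eq_smul (fun y => by rw [hcon y, one_smul]))
  obtain ⟨x, hx⟩ := exists_moved z hz1
  by_cases h1 : ∀ g : DihedralGroup (2 * p ^ k), g • x = x → g = 1
  · refine baseSize_le {x} (fun g hg => h1 g (hg x (by simp))) (by simp)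
  push_neg at h1
  obtain ⟨g, hgx, hg1⟩ := h1
  obtain ⟨y, hy⟩ := exists_moved g hg1
  by_cases h2 : ∀ u : DihedralGroup (2 * p ^ k), u • x = x → u • y = y → u = 1
  · refine baseSize_le {x, y} (fun u hu => h2 u (hu x (by simp)) (hu y (by simp))) ?_
    exact le_trans (Finset.card_insert_le _ _) (by simp)
  push_neg at h2
  obtain ⟨h, hhx, hhy, hh1⟩ := h2
  obtain ⟨t, ht⟩ := exists_moved h hh1
  refine baseSize_le {x, y, t} ?_ ?_
  · intro u hu
    have hux : u • x = x := hu x (by simp)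
    have huy : u • y = y := hu y (by simp)
    have hut : u • t = t := hu t (by simp)
    by_contra hu1
    have huh : u ≠ h := fun e => ht (e ▸ hut)
    rcases struct hp hk x hx u h g hux hhx hgx hu1 hh1 huh with e | e | e | e
    · exact hg1 e
    · exact hy (by rw [e, huy])
    · exact hy (by rw [e, hhy])
    · exact hy (by rw [e, mul_smul, hhy, huy])
  · refine le_trans (Finset.card_insert_le _ _) ?_
    have := Finset.card_insert_le y ({t} : Finset S)
    simp only [Finset.card_singleton] at this ⊢
    omega
end

section
/- Let p and q be distinct odd primes. Consider the subgroup G of Sym({1,...,p+q}) generated by r = (1 2 ... p)(p+1 p+2 ... p+q) and an involution f that fixes p and p+q and satisfies f r f = r⁻¹. Then G is isomorphic to the dihedral group of order 2pq and the base size of its natural action on {1,...,p+q} is exactly 3. -/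
private lemma rpow_val {p q : ℕ} (hp : 1 < p) (hq : 1 < q) (r : Equiv.Perm (Fin (p + q)))
    (hr : ∀ i : Fin (p + q), (r i).val =
      if i.val = p - 1 then 0 else if i.val = p + q - 1 then p else i.val + 1)
    (k : ℕ) (i : Fin (p + q)) :
    ((r ^ k) i).val = if i.val < p then (i.val + k) % p else p + ((i.val - p + k) % q) := by
  induction k with
  | zero =>
    simp only [pow_zero, Equiv.Perm.one_apply]
    split_ifs with h
    · exact (Nat.mod_eq_of_lt (by omega)).symm
    · have := i.isLt
      rw [Nat.mod_eq_of_lt (by omega)]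
      omega
  | succ k ih =>
    rw [pow_succ', Equiv.Perm.mul_apply]
    set j := (r ^ k) i with hj
    rw [hr j]
    by_cases hip : i.val < p
    · rw [if_pos hip] at ih ⊢
      set m := (i.val + k) % p with hm
      have hmlt : m < p := Nat.mod_lt _ (by omega)
      have hmod : (i.val + (k + 1)) % p = (m + 1) % p := by
        have h1 : (i.val + k) % p = m % p := by rw [Nat.mod_eq_of_lt hmlt]
        have h2 : (i.val + k + 1) % p = (m + 1) % p := Nat.ModEq.add_right 1 h1
        have h3 : i.val + (k + 1) = i.val + k + 1 := by ring
        rw [h3, h2]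
      by_cases he : j.val = p - 1
      · rw [if_pos he]
        have : m = p - 1 := by omega
        rw [hmod, this]
        have : p - 1 + 1 = p := by omega
        rw [this, Nat.mod_self]
      · rw [if_neg he, if_neg (by omega), ih, hmod, Nat.mod_eq_of_lt (by omega)]
    · rw [if_neg hip] at ih ⊢
      set m := (i.val - p + k) % q with hm
      have hmlt : m < q := Nat.mod_lt _ (by omega)
      have hmod : (i.val - p + (k + 1)) % q = (m + 1) % q := by
        have h1 : (i.val - p + k) % q = m % q := by rw [Nat.mod_eq_of_lt hmlt]
        have h2 : (i.val - p + k + 1) % q = (m + 1) % q := Nat.ModEq.add_right 1 h1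
        have h3 : i.val - p + (k + 1) = i.val - p + k + 1 := by ring
        rw [h3, h2]
      have hnp : ¬ j.val = p - 1 := by omega
      rw [if_neg hnp]
      by_cases he : j.val = p + q - 1
      · rw [if_pos he]
        have : m = q - 1 := by omega
        rw [hmod, this]
        have : q - 1 + 1 = q := by omega
        rw [this, Nat.mod_self]
        omega
      · rw [if_neg he, ih, hmod, Nat.mod_eq_of_lt (by omega)]
        omega


private def dihMap {G : Type*} [Group G] {n : ℕ} (a b : G) : DihedralGroup n → G
  | DihedralGroup.r i => a ^ i.val
  | DihedralGroup.sr i => b * a ^ i.val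

private lemma closure_elts {G : Type*} [Group G] {n : ℕ} (a b : G) (hn : 0 < n)
    (ha : a ^ n = 1) (hb : b * b = 1) (hrel : b * a * b = a⁻¹) :
    ∀ g ∈ Subgroup.closure {a, b}, ∃ k : ℕ, g = a ^ k ∨ g = b * a ^ k := by
  have hbinv : b⁻¹ = b := inv_eq_of_mul_eq_one_right hb
  have hainv : a⁻¹ = a ^ (n - 1) := by
    have h1 : a * a ^ (n - 1) = 1 := by
      rw [← pow_succ']
      have : n - 1 + 1 = n := by omega
      rw [this, ha]
    exact inv_eq_of_mul_eq_one_right h1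
  have hpinv : ∀ k : ℕ, (a ^ k)⁻¹ = a ^ ((n - 1) * k) := by
    intro k
    rw [← inv_pow, hainv, ← pow_mul]
  have hbconj : ∀ k : ℕ, b * a ^ k * b = (a ^ k)⁻¹ := by
    intro k
    have h1 : (b * a * b⁻¹) ^ k = b * a ^ k * b⁻¹ := conj_pow
    rw [hbinv, hrel] at h1
    rw [← h1, inv_pow]
  have hswap : ∀ k : ℕ, a ^ k * b = b * a ^ ((n - 1) * k) := by
    intro k
    have := hbconj k
    have h2 : a ^ k * b = b⁻¹ * (a ^ k)⁻¹ := by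
      rw [hbinv]
      calc a ^ k * b = b * (b * a ^ k * b) := by rw [← mul_assoc, ← mul_assoc, hb, one_mul]
        _ = b * (a ^ k)⁻¹ := by rw [this]
    rw [h2, hbinv, hpinv]
  intro g hg
  induction hg using Subgroup.closure_induction with
  | mem x hx =>
    rcases hx with h | h
    · exact ⟨1, Or.inl (by rw [h, pow_one])⟩
    · exact ⟨0, Or.inr (by simp at h; rw [h, pow_zero, mul_one])⟩
  | one => exact ⟨0, Or.inl (by rw [pow_zero])⟩
  | mul x y hx hy ihx ihy =>
    obtain ⟨j, hj⟩ := ihx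
    obtain ⟨k, hk⟩ := ihy
    rcases hj with hj | hj <;> rcases hk with hk | hk
    · exact ⟨j + k, Or.inl (by rw [hj, hk, pow_add])⟩
    · refine ⟨(n - 1) * j + k, Or.inr ?_⟩
      rw [hj, hk, ← mul_assoc, hswap j, mul_assoc, ← pow_add]
    · exact ⟨j + k, Or.inr (by rw [hj, hk, mul_assoc, ← pow_add])⟩
    · refine ⟨(n - 1) * j + k, Or.inl ?_⟩
      rw [hj, hk]
      calc b * a ^ j * (b * a ^ k) = (b * a ^ j * b) * a ^ k := (mul_assoc _ _ _).symm
        _ = a ^ ((n-1) * j) * a ^ k := by rw [hbconj, hpinv]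
        _ = a ^ ((n-1) * j + k) := by rw [pow_add]
  | inv x hx ihx =>
    obtain ⟨k, hk⟩ := ihx
    rcases hk with hk | hk
    · exact ⟨(n - 1) * k, Or.inl (by rw [hk, hpinv])⟩
    · refine ⟨k, Or.inr ?_⟩
      rw [hk]
      have : (b * a ^ k) * (b * a ^ k) = 1 := by
        calc (b * a ^ k) * (b * a ^ k) = (b * a ^ k * b) * a ^ k := (mul_assoc _ _ _).symm
          _ = (a ^ k)⁻¹ * a ^ k := by rw [hbconj]
          _ = 1 := inv_mul_cancel _
      exact inv_eq_of_mul_eq_one_right this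

private lemma dih_iso {G : Type*} [Group G] {n : ℕ} (hn : 1 < n) (a b : G)
    (ha : orderOf a = n) (hb2 : orderOf b = 2) (hrel : b * a * b = a⁻¹)
    (hmem : b ∉ Subgroup.zpowers a) :
    Nonempty (↥(Subgroup.closure {a, b}) ≃* DihedralGroup n) := by
  haveI : NeZero n := ⟨by omega⟩
  haveI : Fact (1 < n) := ⟨hn⟩
  have hb : b * b = 1 := by
    have := pow_orderOf_eq_one b
    rwa [hb2, sq] at this
  have hbinv : b⁻¹ = b := inv_eq_of_mul_eq_one_right hb
  have key : ∀ i j : ZMod n, a ^ ((i + j).val) = a ^ i.val * a ^ j.val := by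
    intro i j
    rw [ZMod.val_add, ← pow_add]
    conv_rhs => rw [← pow_mod_orderOf]
    rw [ha]
  have key2 : ∀ i j : ZMod n, a ^ ((j - i).val) = (a ^ i.val)⁻¹ * a ^ j.val := by
    intro i j
    rw [eq_inv_mul_iff_mul_eq]
    calc a ^ i.val * a ^ (j - i).val = a ^ ((j - i).val) * a ^ i.val := by
          rw [← pow_add, ← pow_add, Nat.add_comm]
      _ = a ^ ((j - i + i).val) := (key _ _).symm
      _ = a ^ j.val := by rw [sub_add_cancel]
  have bswap : ∀ k : ℕ, a ^ k * b = b * (a ^ k)⁻¹ := by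
    intro k
    have h1 : (b * a * b⁻¹) ^ k = b * a ^ k * b⁻¹ := conj_pow
    rw [hbinv, hrel] at h1
    have h2 : b * a ^ k * b = (a ^ k)⁻¹ := by rw [← h1, inv_pow]
    calc a ^ k * b = b * (b * a ^ k * b) := by
          rw [← mul_assoc, ← mul_assoc, hb, one_mul]
      _ = b * (a ^ k)⁻¹ := by rw [h2]
  let φ : DihedralGroup n →* G :=
    { toFun := dihMap a b
      map_one' := by
        rw [DihedralGroup.one_def]
        show a ^ (0 : ZMod n).val = 1
        rw [ZMod.val_zero, pow_zero]
      map_mul' := by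
        rintro (i | i) (j | j)
        · rw [DihedralGroup.r_mul_r]
          exact key i j
        · rw [DihedralGroup.r_mul_sr]
          show b * a ^ ((j - i).val) = a ^ i.val * (b * a ^ j.val)
          calc b * a ^ ((j - i).val) = b * ((a ^ i.val)⁻¹ * a ^ j.val) := by rw [key2]
            _ = (b * (a ^ i.val)⁻¹) * a ^ j.val := (mul_assoc _ _ _).symm
            _ = (a ^ i.val * b) * a ^ j.val := by rw [bswap]
            _ = a ^ i.val * (b * a ^ j.val) := mul_assoc _ _ _
        · rw [DihedralGroup.sr_mul_r]
          show b * a ^ ((i + j).val) = b * a ^ i.val * a ^ j.val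
          rw [key, mul_assoc]
        · rw [DihedralGroup.sr_mul_sr]
          show a ^ ((j - i).val) = b * a ^ i.val * (b * a ^ j.val)
          have h2 : b * a ^ i.val * b = (a ^ i.val)⁻¹ := by
            have h1 : (b * a * b⁻¹) ^ i.val = b * a ^ i.val * b⁻¹ := conj_pow
            rw [hbinv, hrel] at h1
            rw [← h1, inv_pow]
          calc a ^ ((j - i).val) = (a ^ i.val)⁻¹ * a ^ j.val := key2 i j
            _ = (b * a ^ i.val * b) * a ^ j.val := by rw [h2]
            _ = b * a ^ i.val * (b * a ^ j.val) := by rw [mul_assoc, mul_assoc] }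
  have hinj : Function.Injective φ := by
    rw [injective_iff_map_eq_one]
    rintro (i | i) hx
    · have hx' : a ^ i.val = 1 := hx
      have hdvd : n ∣ i.val := by
        have := orderOf_dvd_of_pow_eq_one hx'
        rwa [ha] at this
      have : i.val = 0 := Nat.eq_zero_of_dvd_of_lt hdvd (ZMod.val_lt i) |>.symm ▸ rfl
      have hi0 : i = 0 := by
        have := (ZMod.val_eq_zero i).mp (Nat.eq_zero_of_dvd_of_lt hdvd (ZMod.val_lt i))
        exact this
      rw [hi0, ← DihedralGroup.one_def]
    · exfalso
      have hx' : b * a ^ i.val = 1 := hx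
      have hbeq : b = (a ^ i.val)⁻¹ := eq_inv_of_mul_eq_one_left hx'
      apply hmem
      rw [hbeq]
      exact (Subgroup.zpowers a).inv_mem ((Subgroup.zpowers a).pow_mem (Subgroup.mem_zpowers a) _)
  have hrange : φ.range = Subgroup.closure {a, b} := by
    apply le_antisymm
    · rintro g ⟨x, rfl⟩
      have hac : a ∈ Subgroup.closure {a, b} :=
        Subgroup.subset_closure (Set.mem_insert _ _)
      have hbc : b ∈ Subgroup.closure {a, b} :=
        Subgroup.subset_closure (Set.mem_insert_of_mem _ rfl)
      rcases x with i | i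
      · exact Subgroup.pow_mem _ hac _
      · exact Subgroup.mul_mem _ hbc (Subgroup.pow_mem _ hac _)
    · rw [Subgroup.closure_le]
      rintro x hx
      rcases Set.mem_insert_iff.mp hx with h | h
      · exact ⟨DihedralGroup.r 1, by
          show a ^ (1 : ZMod n).val = x
          rw [ZMod.val_one, pow_one]; exact h.symm⟩
      · simp only [Set.mem_singleton_iff] at h
        exact ⟨DihedralGroup.sr 0, by
          show b * a ^ (0 : ZMod n).val = x
          rw [ZMod.val_zero, pow_zero, mul_one]; exact h.symm⟩
  exact ⟨((MonoidHom.ofInjective hinj).trans (MulEquiv.subgroupCongr hrange)).symm⟩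

/-- The base size of the natural action of a subgroup of `Equiv.Perm S` on `S`. -/
noncomputable def permBaseSize {S : Type*} (G : Subgroup (Equiv.Perm S)) : ℕ :=
  sInf {n | ∃ B : Finset S,
    (∀ g ∈ G, (∀ x ∈ B, g x = x) → g = 1) ∧ B.card = n}

/-- Let `p ≠ q` be odd primes.  Working with `Fin (p + q)` as the set `{1, …, p + q}`
(index `i` standing for the point `i + 1`), let `r` be the permutation
`(1 2 … p)(p+1 … p+q)` and let `f` be an involution fixing `p` and `p + q` with
`f * r * f = r⁻¹`.  Then the subgroup generated by `r` and `f` is isomorphic to the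
dihedral group of order `2pq`, and the base size of its natural action is exactly `3`. -/
theorem stmt11 (p q : ℕ) (hp : p.Prime) (hq : q.Prime) (hop : Odd p) (hoq : Odd q)
    (hpq : p ≠ q) (r f : Equiv.Perm (Fin (p + q)))
    (hr : ∀ i : Fin (p + q), (r i).val =
      if i.val = p - 1 then 0 else if i.val = p + q - 1 then p else i.val + 1)
    (hf2 : orderOf f = 2)
    (hfixp : ∀ i : Fin (p + q), i.val = p - 1 → f i = i)
    (hfixq : ∀ i : Fin (p + q), i.val = p + q - 1 → f i = i)
    (hconj : f * r * f = r⁻¹) :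
    Nonempty (Subgroup.closure {r, f} ≃* DihedralGroup (p * q)) ∧
      permBaseSize (Subgroup.closure {r, f}) = 3 := by
  have hp3 : 3 ≤ p := by
    have h2 := hp.two_le
    have := Nat.odd_iff.mp hop
    omega
  have hq3 : 3 ≤ q := by
    have h2 := hq.two_le
    have := Nat.odd_iff.mp hoq
    omega
  have hp1 : 1 < p := by omega
  have hq1 : 1 < q := by omega
  have hcop : p.Coprime q := (Nat.coprime_primes hp hq).mpr hpq
  have hpq9 : 9 ≤ p * q := Nat.mul_le_mul hp3 hq3
  have hn1 : 1 < p * q := by omega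
  -- power values
  have hpow := rpow_val hp1 hq1 r hr
  -- r ^ (p*q) = 1
  have hrpq : r ^ (p * q) = 1 := by
    apply Equiv.ext
    intro i
    apply Fin.ext
    rw [hpow (p * q) i]
    simp only [Equiv.Perm.one_apply]
    by_cases hi : i.val < p
    · rw [if_pos hi, Nat.add_mul_mod_self_left, Nat.mod_eq_of_lt hi]
    · rw [if_neg hi]
      have hlt : i.val - p < q := by have := i.isLt; omega
      rw [mul_comm p q, Nat.add_mul_mod_self_left, Nat.mod_eq_of_lt hlt]
      omega
  -- r ^ k = 1 → p ∣ k ∧ q ∣ k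
  have hposn : 0 < p + q := by omega
  have hrk : ∀ k : ℕ, r ^ k = 1 → p ∣ k ∧ q ∣ k := by
    intro k hk
    constructor
    · have := congrArg (fun σ : Equiv.Perm (Fin (p + q)) => (σ ⟨0, hposn⟩).val) hk
      simp only [Equiv.Perm.one_apply] at this
      rw [hpow k ⟨0, hposn⟩] at this
      simp only [if_pos (by omega : (0 : ℕ) < p), Nat.zero_add] at this
      exact Nat.dvd_of_mod_eq_zero this
    · have hplt : p < p + q := by omega
      have := congrArg (fun σ : Equiv.Perm (Fin (p + q)) => (σ ⟨p, hplt⟩).val) hk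
      simp only [Equiv.Perm.one_apply] at this
      rw [hpow k ⟨p, hplt⟩] at this
      simp only [if_neg (by omega : ¬ (p < p)), Nat.sub_self, Nat.zero_add] at this
      exact Nat.dvd_of_mod_eq_zero (by omega)
  -- order of r
  have horder : orderOf r = p * q := by
    apply Nat.dvd_antisymm (orderOf_dvd_of_pow_eq_one hrpq)
    obtain ⟨h1, h2⟩ := hrk (orderOf r) (pow_orderOf_eq_one r)
    exact Nat.Coprime.mul_dvd_of_dvd_of_dvd hcop h1 h2
  -- f not a power of r
  have hmem : f ∉ Subgroup.zpowers r := by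
    intro h
    have hdvd := orderOf_dvd_of_mem_zpowers h
    rw [hf2, horder] at hdvd
    have := Nat.odd_iff.mp (hop.mul hoq)
    omega
  have hff : f * f = 1 := by
    have := pow_orderOf_eq_one f
    rwa [hf2, sq] at this
  have hfinv : f⁻¹ = f := inv_eq_of_mul_eq_one_right hff
  have hrmem : r ∈ Subgroup.closure {r, f} :=
    Subgroup.subset_closure (Set.mem_insert _ _)
  have hfmem : f ∈ Subgroup.closure {r, f} :=
    Subgroup.subset_closure (Set.mem_insert_of_mem _ rfl)
  have helts := closure_elts r f (by omega : 0 < p * q) hrpq hff hconj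
  constructor
  · exact dih_iso hn1 r f horder hf2 hconj hmem
  · -- base size
    apply le_antisymm
    · -- sInf ≤ 3 : exhibit base {0, 1, p}
      apply Nat.sInf_le
      have h0 : (0 : ℕ) < p + q := by omega
      have h1lt : (1 : ℕ) < p + q := by omega
      have hplt : p < p + q := by omega
      refine ⟨{⟨0, h0⟩, ⟨1, h1lt⟩, ⟨p, hplt⟩}, ?_, ?_⟩
      · intro g hg hfix
        obtain ⟨k, hk⟩ := helts g hg
        have e0 : g ⟨0, h0⟩ = ⟨0, h0⟩ := hfix _ (by simp)
        have e1 : g ⟨1, h1lt⟩ = ⟨1, h1lt⟩ := hfix _ (by simp)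
        have ep : g ⟨p, hplt⟩ = ⟨p, hplt⟩ := hfix _ (by simp)
        rcases hk with hk | hk
        · -- rotation
          subst hk
          have d1 : p ∣ k := by
            have := congrArg Fin.val e0
            rw [hpow k ⟨0, h0⟩] at this
            simp only [if_pos (by omega : (0:ℕ) < p), Nat.zero_add] at this
            exact Nat.dvd_of_mod_eq_zero this
          have d2 : q ∣ k := by
            have := congrArg Fin.val ep
            rw [hpow k ⟨p, hplt⟩] at this
            simp only [if_neg (by omega : ¬ (p < p)), Nat.sub_self, Nat.zero_add] at this
            exact Nat.dvd_of_mod_eq_zero (by omega)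
          have : p * q ∣ k := Nat.Coprime.mul_dvd_of_dvd_of_dvd hcop d1 d2
          rw [← horder] at this
          exact orderOf_dvd_iff_pow_eq_one.mp this
        · -- reflection : contradiction
          exfalso
          have grg : g * r * g⁻¹ = r⁻¹ := by
            rw [hk]
            have h' : (f * r ^ k) * r * (f * r ^ k)⁻¹ = f * r * f⁻¹ := by group
            rw [h', hfinv, hconj]
          have happ : g (r ⟨0, h0⟩) = r⁻¹ (g ⟨0, h0⟩) := by
            have := congrArg (fun σ : Equiv.Perm (Fin (p + q)) => σ (g ⟨0, h0⟩)) grg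
            simp only [Equiv.Perm.mul_apply, Equiv.Perm.coe_inv, Equiv.symm_apply_apply] at this
            exact this
          have hr0 : r ⟨0, h0⟩ = ⟨1, h1lt⟩ := by
            apply Fin.ext
            rw [hr ⟨0, h0⟩]
            simp only
            rw [if_neg (by omega), if_neg (by omega)]
          rw [hr0, e1, e0] at happ
          have : r ⟨1, h1lt⟩ = ⟨0, h0⟩ := by
            rw [happ, Equiv.Perm.coe_inv, Equiv.apply_symm_apply]
          have := congrArg Fin.val this
          rw [hr ⟨1, h1lt⟩] at this
          simp only at this
          rw [if_neg (by omega), if_neg (by omega)] at this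
          omega
      · -- card = 3
        rw [Finset.card_insert_of_notMem (by simp [Fin.ext_iff]; omega),
          Finset.card_insert_of_notMem (by simp [Fin.ext_iff]; omega),
          Finset.card_singleton]
    · -- 3 ≤ sInf : no base of size ≤ 2
      apply le_csInf
      · -- nonempty: the whole Fin (p+q) as finset is a base... use any; easier: the set is nonempty
        -- reuse: any superset works; use univ
        refine ⟨(p + q), Finset.univ, ?_, by simp⟩
        intro g _ hfix
        apply Equiv.ext
        intro i
        simpa using hfix i (Finset.mem_univ i)
      intro m hm
      by_contra hlt
      push_neg at hlt
      obtain ⟨B, hBprop, hBcard⟩ := hm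
      have hB2 : B.card ≤ 2 := by omega
      by_cases hall : ∀ x ∈ B, x.val < p
      · -- r ^ p fixes B
        have h1 : r ^ p = 1 := by
          apply hBprop _ (Subgroup.pow_mem _ hrmem p)
          intro x hx
          apply Fin.ext
          rw [hpow p x, if_pos (hall x hx), Nat.add_mod_right, Nat.mod_eq_of_lt (hall x hx)]
        have hdvd : p * q ∣ p := by rw [← horder]; exact orderOf_dvd_of_pow_eq_one h1
        have hle : p * q ≤ p := Nat.le_of_dvd (by omega) hdvd
        have : p * 3 ≤ p * q := Nat.mul_le_mul_left p hq3
        omega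
      · by_cases hall2 : ∀ x ∈ B, p ≤ x.val
        · have h1 : r ^ q = 1 := by
            apply hBprop _ (Subgroup.pow_mem _ hrmem q)
            intro x hx
            apply Fin.ext
            have hxp := hall2 x hx
            have hxlt : x.val - p < q := by have := x.isLt; omega
            rw [hpow q x, if_neg (by omega), Nat.add_mod_right, Nat.mod_eq_of_lt hxlt]
            omega
          have hdvd : p * q ∣ q := by rw [← horder]; exact orderOf_dvd_of_pow_eq_one h1
          have hle : p * q ≤ q := Nat.le_of_dvd (by omega) hdvd
          have : q * 3 ≤ q * p := Nat.mul_le_mul_left q hp3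
          have : q * p = p * q := Nat.mul_comm q p
          omega
        · push_neg at hall hall2
          obtain ⟨x, hxB, hxp⟩ := hall
          obtain ⟨y, hyB, hyp⟩ := hall2
          have hyplt : y.val < p := by omega
          have hxpge : p ≤ x.val := by omega
          have hxy : x ≠ y := by
            intro h
            rw [h] at hxpge
            omega
          -- B = {x, y}
          have hsub : ({x, y} : Finset (Fin (p + q))) ⊆ B := by
            intro z hz
            rcases Finset.mem_insert.mp hz with h | h
            · rwa [h]
            · rw [Finset.mem_singleton.mp h]; exact hyB
          have hcard2 : ({x, y} : Finset (Fin (p + q))).card = 2 := by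
            rw [Finset.card_insert_of_notMem (by simp [hxy]), Finset.card_singleton]
          have hBeq : ({x, y} : Finset (Fin (p + q))) = B :=
            Finset.eq_of_subset_of_card_le hsub (by omega)
          -- choose a via CRT
          obtain ⟨a, ha1, ha2⟩ := Nat.chineseRemainder hcop (y.val + 1) (x.val - p + 1)
          -- r^a sends p-1 to y and p+q-1 to x
          have hplt1 : p - 1 < p + q := by omega
          have hpqlt : p + q - 1 < p + q := by omega
          have hy' : (r ^ a) ⟨p - 1, hplt1⟩ = y := by
            apply Fin.ext
            rw [hpow a ⟨p - 1, hplt1⟩]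
            simp only
            rw [if_pos (by omega : p - 1 < p)]
            have h1 : (p - 1 + a) % p = (p - 1 + (y.val + 1)) % p := Nat.ModEq.add_left (p - 1) ha1
            have h2 : p - 1 + (y.val + 1) = p + y.val := by omega
            rw [h1, h2, Nat.add_mod_left, Nat.mod_eq_of_lt hyplt]
          have hx' : (r ^ a) ⟨p + q - 1, hpqlt⟩ = x := by
            apply Fin.ext
            rw [hpow a ⟨p + q - 1, hpqlt⟩]
            simp only
            rw [if_neg (by omega : ¬ (p + q - 1 < p))]
            have he : p + q - 1 - p = q - 1 := by omega
            rw [he]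
            have h1 : (q - 1 + a) % q = (q - 1 + (x.val - p + 1)) % q := Nat.ModEq.add_left (q - 1) ha2
            have h2 : q - 1 + (x.val - p + 1) = q + (x.val - p) := by omega
            have h3 : x.val - p < q := by have := x.isLt; omega
            rw [h1, h2, Nat.add_mod_left, Nat.mod_eq_of_lt h3]
            omega
          -- the reflection fixing x and y
          set g : Equiv.Perm (Fin (p + q)) := r ^ a * f * (r ^ a)⁻¹ with hg
          have hgmem : g ∈ Subgroup.closure {r, f} :=
            Subgroup.mul_mem _ (Subgroup.mul_mem _ (Subgroup.pow_mem _ hrmem a) hfmem)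
              (Subgroup.inv_mem _ (Subgroup.pow_mem _ hrmem a))
          have hgx : g x = x := by
            rw [hg]
            simp only [Equiv.Perm.mul_apply]
            rw [← hx', Equiv.Perm.coe_inv, Equiv.symm_apply_apply, hfixq ⟨p + q - 1, hpqlt⟩ rfl, hx']
          have hgy : g y = y := by
            rw [hg]
            simp only [Equiv.Perm.mul_apply]
            rw [← hy', Equiv.Perm.coe_inv, Equiv.symm_apply_apply, hfixp ⟨p - 1, hplt1⟩ rfl, hy']
          have hg1 : g = 1 := by
            apply hBprop g hgmem
            intro z hz
            rw [← hBeq] at hz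
            rcases Finset.mem_insert.mp hz with h | h
            · rw [h]; exact hgx
            · rw [Finset.mem_singleton.mp h]; exact hgy
          have hf1 : f = 1 := by
            have h2 : r ^ a * f = r ^ a := by
              have := mul_inv_eq_one.mp (by rw [← hg]; exact hg1)
              exact this
            exact mul_left_cancel (by rw [h2, mul_one])
          rw [hf1, orderOf_one] at hf2
          omega
end

section
/- Let G be a permutation group on a finite set, let f, r ∈ G with f of prime order and r of a different prime order, and suppose fr has order equal to the order of f. Then every cycle of r (equivalently, every ⟨r⟩-orbit of size > 1) contains a point moved by f. -/
/-- Let `f, r` be permutations of a finite set with `f` of prime order `pf` and `r` of a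
different prime order `pr`, and suppose `f * r` has order equal to the order of `f`.
Then every cycle of `r` (every `⟨r⟩`-orbit of size `> 1`) contains a point moved by `f`. -/
theorem stmt14 (S : Type*) [Fintype S] (f r : Equiv.Perm S) (pf pr : ℕ)
    (hpf : pf.Prime) (hpr : pr.Prime) (hne : pf ≠ pr)
    (hf : orderOf f = pf) (hr : orderOf r = pr)
    (hfr : orderOf (f * r) = orderOf f) :
    ∀ x : S, 1 < Nat.card (MulAction.orbit (Subgroup.zpowers r) x) →
      ∃ y ∈ MulAction.orbit (Subgroup.zpowers r) x, f y ≠ y := by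
  intro x hx
  by_contra hcon
  push_neg at hcon
  have horb : ∀ k : ℕ, (r ^ k) x ∈ MulAction.orbit (Subgroup.zpowers r) x := by
    intro k
    exact ⟨⟨r ^ k, Subgroup.pow_mem _ (Subgroup.mem_zpowers r) k⟩, rfl⟩
  have key : ∀ k : ℕ, ((f * r) ^ k) x = (r ^ k) x := by
    intro k
    induction k with
    | zero => simp
    | succ n ih =>
      have : (f * r) ^ (n + 1) = (f * r) * (f * r) ^ n := by
        rw [pow_succ']
      rw [this, Equiv.Perm.mul_apply, ih, Equiv.Perm.mul_apply]
      have : r ((r ^ n) x) = (r ^ (n + 1)) x := by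
        rw [pow_succ', Equiv.Perm.mul_apply]
      rw [this]
      exact hcon _ (horb (n + 1))
  have hrpf : (r ^ pf) x = x := by
    have h1 : ((f * r) ^ pf) x = x := by
      rw [← hf, ← hfr, pow_orderOf_eq_one]; rfl
    rw [← key, h1]
  have hrpr : (r ^ pr) x = x := by
    rw [← hr, pow_orderOf_eq_one]; rfl
  have hrx : r x = x := by
    have hcop : Nat.Coprime pf pr := (Nat.coprime_primes hpf hpr).mpr hne
    have hbez := Nat.gcd_eq_gcd_ab pf pr
    rw [hcop] at hbez
    have hz : r = r ^ ((pf : ℤ) * Nat.gcdA pf pr + (pr : ℤ) * Nat.gcdB pf pr) := by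
      rw [← hbez]; simp
    have h1 : (r ^ ((pf : ℤ) * Nat.gcdA pf pr)) x = x := by
      rw [zpow_mul, zpow_natCast]
      exact Equiv.Perm.zpow_apply_eq_self_of_apply_eq_self hrpf _
    have h2 : (r ^ ((pr : ℤ) * Nat.gcdB pf pr)) x = x := by
      rw [zpow_mul, zpow_natCast]
      exact Equiv.Perm.zpow_apply_eq_self_of_apply_eq_self hrpr _
    conv_lhs => rw [hz]
    rw [zpow_add, Equiv.Perm.mul_apply, h2, h1]
  have horb1 : MulAction.orbit (Subgroup.zpowers r) x = {x} := by
    apply Set.eq_singleton_iff_unique_mem.mpr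
    refine ⟨MulAction.mem_orbit_self x, ?_⟩
    rintro y ⟨⟨g, n, rfl⟩, rfl⟩
    exact Equiv.Perm.zpow_apply_eq_self_of_apply_eq_self hrx n
  rw [horb1] at hx
  simp at hx
end

section
/- Let G be a finite group of order 2pq (p < q distinct odd primes) acting faithfully on a finite set S, and suppose the minimal base size of this action is 3. Then every orbit of G on S has size at most q. -/
lemma divisors_of_two_mul_mul {p q s : ℕ} (hp : p.Prime) (hq : q.Prime)
    (h : s ∣ 2 * p * q) :
    s = 1 ∨ s = 2 ∨ s = p ∨ s = q ∨ s = 2 * p ∨ s = 2 * q ∨ s = p * q ∨ s = 2 * p * q := by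
  rw [mul_assoc] at h
  obtain ⟨a, b, ha, hb, hab⟩ := exists_dvd_and_dvd_of_dvd_mul h
  obtain ⟨c, d, hc, hd, hcd⟩ := exists_dvd_and_dvd_of_dvd_mul hb
  subst hcd; subst hab
  rcases Nat.prime_two.eq_one_or_self_of_dvd a ha with rfl | rfl <;>
    rcases hp.eq_one_or_self_of_dvd c hc with rfl | rfl <;>
      rcases hq.eq_one_or_self_of_dvd d hd with rfl | rfl <;>
        simp only [one_mul, mul_one, ← mul_assoc] <;> tauto

/-- Let `G` be a finite group of order `2pq` (`p < q` distinct odd primes) acting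
faithfully on a finite set `S`, with minimal base size `3`.  Then every orbit of `G` on
`S` has size at most `q`. -/
theorem stmt16 (G S : Type*) [Group G] [Fintype G] [Fintype S] [MulAction G S]
    [FaithfulSMul G S] (p q : ℕ) (hp : p.Prime) (hq : q.Prime)
    (hop : Odd p) (hoq : Odd q) (hlt : p < q)
    (hcard : Nat.card G = 2 * p * q) (hbase : baseSize G S = 3) :
    ∀ v : S, Nat.card (MulAction.orbit G v) ≤ q := by
  classical
  intro v
  by_contra hgt
  push_neg at hgt
  -- It suffices to produce a base of size ≤ 2.
  suffices hsuff : ∃ B : Finset S, IsBase G (B : Set S) ∧ B.card ≤ 2 by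
    obtain ⟨B, hB, hBle⟩ := hsuff
    have : baseSize G S ≤ B.card := Nat.sInf_le ⟨B, hB, rfl⟩
    omega
  haveI : Fintype (MulAction.orbit G v) := Fintype.ofFinite _
  have hos : Nat.card (MulAction.orbit G v) * Nat.card (MulAction.stabilizer G v)
      = 2 * p * q := by
    rw [← hcard]
    simpa [Nat.card_eq_fintype_card] using
      MulAction.card_orbit_mul_card_stabilizer_eq_card_group G v
  have hp2 : 2 ≤ p := hp.two_le
  have hq2 : 2 ≤ q := hq.two_le
  have hslt : Nat.card (MulAction.stabilizer G v) < 2 * p := by nlinarith [hgt, hos]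
  have hsdvd : Nat.card (MulAction.stabilizer G v) ∣ 2 * p * q := Dvd.intro_left _ hos
  have hsenum : Nat.card (MulAction.stabilizer G v) = 1 ∨
      Nat.card (MulAction.stabilizer G v) = 2 ∨
      Nat.card (MulAction.stabilizer G v) = p ∨
      Nat.card (MulAction.stabilizer G v) = q := by
    rcases divisors_of_two_mul_mul hp hq hsdvd with h | h | h | h | h | h | h | h
    · tauto
    · tauto
    · tauto
    · tauto
    · omega
    · nlinarith
    · nlinarith
    · nlinarith
  rcases hsenum with h1 | hpr
  · -- trivial stabilizer: {v} is a base
    refine ⟨{v}, ?_, by simp⟩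
    intro g hg
    have hgK : g ∈ MulAction.stabilizer G v :=
      MulAction.mem_stabilizer_iff.mpr (hg v (by simp))
    have hbot : MulAction.stabilizer G v = ⊥ := Subgroup.eq_bot_of_card_eq _ h1
    simpa [hbot] using hgK
  · -- stabilizer of prime order
    have hsp : (Nat.card (MulAction.stabilizer G v)).Prime := by
      rcases hpr with h | h | h <;> rw [h]
      · exact Nat.prime_two
      · exact hp
      · exact hq
    have hnt : Nontrivial (MulAction.stabilizer G v) :=
      Finite.one_lt_card_iff_nontrivial.mp hsp.one_lt
    obtain ⟨h, hh1⟩ := exists_ne (1 : MulAction.stabilizer G v)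
    have hhK : (h : G) ∈ MulAction.stabilizer G v := h.2
    have hh1' : (h : G) ≠ 1 := fun e => hh1 (Subtype.ext (by simpa using e))
    -- find a point moved by h
    have hw : ∃ w : S, (h : G) • w ≠ w := by
      by_contra hfix
      push_neg at hfix
      exact hh1' (eq_of_smul_eq_smul (fun a => by rw [one_smul]; exact hfix a))
    obtain ⟨w, hw⟩ := hw
    refine ⟨{v, w}, ?_, Finset.card_le_two⟩
    intro g hg
    have hgv : g ∈ MulAction.stabilizer G v :=
      MulAction.mem_stabilizer_iff.mpr (hg v (by simp))
    have hgw : g ∈ MulAction.stabilizer G w :=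
      MulAction.mem_stabilizer_iff.mpr (hg w (by simp))
    by_contra hg1
    -- g generates the stabilizer of v
    have hle : Subgroup.zpowers g ≤ MulAction.stabilizer G v := by
      rw [Subgroup.zpowers_le]; exact hgv
    have hord : Nat.card (Subgroup.zpowers g) = Nat.card (MulAction.stabilizer G v) := by
      rw [Nat.card_zpowers]
      have hdvd : orderOf g ∣ Nat.card (MulAction.stabilizer G v) :=
        Subgroup.orderOf_dvd_natCard _ hgv
      rcases (Nat.dvd_prime hsp).mp hdvd with h1 | h1
      · exact absurd (orderOf_eq_one_iff.mp h1) hg1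
      · exact h1
    have heq : Subgroup.zpowers g = MulAction.stabilizer G v :=
      Subgroup.eq_of_le_of_card_ge hle (le_of_eq hord.symm)
    -- hence h is a power of g, so h fixes w; contradiction
    have hmem : (h : G) ∈ Subgroup.zpowers g := by rw [heq]; exact hhK
    have hle' : Subgroup.zpowers g ≤ MulAction.stabilizer G w := by
      rw [Subgroup.zpowers_le]; exact hgw
    exact hw (hle' hmem)
end

section
/- Let G act on a finite set S with a base {v₁, v₂, v₃} of size 3 and |G| = 2pq for distinct odd primes p < q. If no base of size less than 3 exists, then at least one G-orbit on S has size exactly q. -/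
open MulAction ArithmeticFunction
open scoped ArithmeticFunction.Omega

/-- Orbit–stabilizer, `Nat.card` version. -/
lemma aux_os (α : Type*) {β : Type*} [Group α] [MulAction α β] (b : β) :
    Nat.card (orbit α b) * Nat.card (stabilizer α b) = Nat.card α := by
  rw [← Nat.card_prod]
  exact Nat.card_congr (orbitProdStabilizerEquivGroup α b)

/-- Step 1: if there is a base of size 3 but none smaller, every point stabilizer has at
least two prime factors (with multiplicity). -/
lemma stepA {G S : Type*} [Group G] [Finite G] [MulAction G S] [DecidableEq S]
    (v₁ v₂ v₃ : S) (hB : IsBase G ({v₁, v₂, v₃} : Set S))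
    (hmin : ∀ B : Finset S, IsBase G (B : Set S) → 3 ≤ B.card) (v : S) :
    2 ≤ Ω (Nat.card (stabilizer G v)) := by
  have hs0 : Nat.card (stabilizer G v) ≠ 0 := Nat.card_pos.ne'
  by_contra hcon
  push_neg at hcon
  interval_cases h : Ω (Nat.card (stabilizer G v))
  · -- `Ω = 0` : the stabilizer is trivial, so `{v}` is a base of size 1
    have hs1 : Nat.card (stabilizer G v) = 1 := by
      rw [cardFactors_apply, List.length_eq_zero_iff] at h
      rcases (Nat.primeFactorsList_eq_nil _).mp h with h' | h' <;> omega
    have hbot : stabilizer G v = ⊥ := Subgroup.card_eq_one.mp hs1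
    have hbase : IsBase G (({v} : Finset S) : Set S) := by
      intro g hg
      have : g ∈ stabilizer G v := by
        rw [mem_stabilizer_iff]
        exact hg v (by simp)
      rw [hbot, Subgroup.mem_bot] at this
      exact this
    have := hmin _ hbase
    simp at this
  · -- `Ω = 1` : the stabilizer has prime order
    have hsp : (Nat.card (stabilizer G v)).Prime := cardFactors_eq_one_iff_prime.mp h
    by_cases hfix : ∀ w : S, ∀ g ∈ stabilizer G v, g • w = w
    · have hbot : stabilizer G v = ⊥ := by
        ext g
        simp only [Subgroup.mem_bot]
        exact ⟨fun hg => hB g fun x _ => hfix x g hg, fun hg => by simp [mem_stabilizer_iff, hg]⟩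
      rw [hbot, Subgroup.card_bot] at hsp
      exact hsp.one_lt.ne' rfl
    · push_neg at hfix
      obtain ⟨w, g, hg, hgw⟩ := hfix
      have hLle : stabilizer G v ⊓ stabilizer G w ≤ stabilizer G v := inf_le_left
      have hdvd : Nat.card (stabilizer G v ⊓ stabilizer G w : Subgroup G) ∣
          Nat.card (stabilizer G v) := Subgroup.card_dvd_of_le hLle
      rcases hsp.eq_one_or_self_of_dvd _ hdvd with h1 | h1
      · -- the two-point stabilizer is trivial : `{v, w}` is a base of size ≤ 2
        have hbot : stabilizer G v ⊓ stabilizer G w = ⊥ := Subgroup.card_eq_one.mp h1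
        have hbase : IsBase G (({v, w} : Finset S) : Set S) := by
          intro g' hg'
          have : g' ∈ stabilizer G v ⊓ stabilizer G w :=
            Subgroup.mem_inf.mpr ⟨hg' v (by simp), hg' w (by simp)⟩
          rw [hbot, Subgroup.mem_bot] at this
          exact this
        have h3 := hmin _ hbase
        have h2 : ({v, w} : Finset S).card ≤ 2 :=
          (Finset.card_insert_le _ _).trans (by simp)
        omega
      · -- the two-point stabilizer is everything : contradiction with `g • w ≠ w`
        have : stabilizer G v ⊓ stabilizer G w = stabilizer G v :=
          Subgroup.eq_of_le_of_card_ge hLle h1.ge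
        have hgL : g ∈ stabilizer G v ⊓ stabilizer G w := by rw [this]; exact hg
        exact hgw hgL.2

/-- Step 2: an orbit of size at least `q` has size exactly `q`. -/
lemma stepB {G S : Type*} [Group G] [Finite G] [MulAction G S] [DecidableEq S]
    (p q : ℕ) (hp : p.Prime) (hq : q.Prime) (hop : Odd p) (hoq : Odd q) (hlt : p < q)
    (hcard : Nat.card G = 2 * p * q)
    (v₁ v₂ v₃ : S) (hB : IsBase G ({v₁, v₂, v₃} : Set S))
    (hmin : ∀ B : Finset S, IsBase G (B : Set S) → 3 ≤ B.card)
    (v : S) (hge : q ≤ Nat.card (orbit G v)) :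
    Nat.card (orbit G v) = q := by
  have hp2 : 2 < p := lt_of_le_of_ne hp.two_le (by rintro rfl; exact (Nat.not_odd_iff_even.mpr even_two) hop)
  have hq3 : 3 ≤ q := by omega
  set m := Nat.card (orbit G v) with hm
  set s := Nat.card (stabilizer G v) with hs
  have hms : m * s = 2 * p * q := by rw [hm, hs, aux_os, hcard]
  have hm0 : m ≠ 0 := by
    intro h0; rw [h0, zero_mul] at hms
    exact (by positivity : 0 < 2 * p * q).ne' hms.symm
  have hs0 : s ≠ 0 := Nat.card_pos.ne'
  have hΩ : Ω m + Ω s = 3 := by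
    rw [← cardFactors_mul hm0 hs0, hms, cardFactors_mul (Nat.mul_ne_zero two_ne_zero hp.ne_zero) hq.ne_zero,
      cardFactors_mul two_ne_zero hp.ne_zero, cardFactors_apply_prime Nat.prime_two,
      cardFactors_apply_prime hp, cardFactors_apply_prime hq]
  have hA := stepA v₁ v₂ v₃ hB hmin v
  have hΩm : Ω m ≤ 1 := by rw [← hs] at hA; omega
  have hmprime : m.Prime := by
    rcases Nat.lt_or_ge (Ω m) 1 with h | h
    · exfalso
      have h0 : Ω m = 0 := by omega
      rw [cardFactors_apply, List.length_eq_zero_iff] at h0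
      rcases (Nat.primeFactorsList_eq_nil _).mp h0 with h' | h' <;> omega
    · exact cardFactors_eq_one_iff_prime.mp (le_antisymm hΩm h)
  have hdvd : m ∣ 2 * p * q := ⟨s, hms.symm⟩
  rcases (Nat.Prime.dvd_mul hmprime).mp hdvd with h | h
  · rcases (Nat.Prime.dvd_mul hmprime).mp h with h' | h'
    · have := Nat.le_of_dvd (by norm_num) h'
      omega
    · have := (Nat.prime_dvd_prime_iff_eq hmprime hp).mp h'
      omega
  · exact (Nat.prime_dvd_prime_iff_eq hmprime hq).mp h

/-- Let `G` act on a finite set `S` with a base `{v₁, v₂, v₃}` of size `3`, where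
`|G| = 2pq` for distinct odd primes `p < q`.  If no base of size less than `3` exists,
then some `G`-orbit on `S` has size exactly `q`. -/
theorem stmt17 (G S : Type*) [Group G] [Fintype G] [Fintype S] [DecidableEq S] [MulAction G S]
    (p q : ℕ) (hp : p.Prime) (hq : q.Prime) (hop : Odd p) (hoq : Odd q) (hlt : p < q)
    (hcard : Nat.card G = 2 * p * q)
    (v₁ v₂ v₃ : S) (hB : IsBase G ({v₁, v₂, v₃} : Set S))
    (hcard3 : ({v₁, v₂, v₃} : Finset S).card = 3)
    (hmin : ∀ B : Finset S, IsBase G (B : Set S) → 3 ≤ B.card) :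
    ∃ v : S, Nat.card (MulAction.orbit G v) = q := by
  classical
  set H1 := stabilizer G v₁ with hH1
  set K := stabilizer H1 v₂ with hK
  -- the stabilizer of v₃ inside K is trivial
  have hKbot : stabilizer K v₃ = ⊥ := by
    ext k
    simp only [Subgroup.mem_bot]
    constructor
    · intro hk
      have h3 : ((k : H1) : G) • v₃ = v₃ := hk
      have h2 : ((k : H1) : G) • v₂ = v₂ := k.2
      have h1 : ((k : H1) : G) • v₁ = v₁ := (k : H1).2
      have : ((k : H1) : G) = 1 := by
        apply hB
        intro x hx
        rcases hx with rfl | rfl | rfl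
        · exact h1
        · exact h2
        · exact h3
      ext
      exact this
    · rintro rfl
      simp [mem_stabilizer_iff]
  have e1 : Nat.card (orbit G v₁) * Nat.card H1 = 2 * p * q := by
    rw [aux_os, hcard]
  have e2 : Nat.card (orbit H1 v₂) * Nat.card K = Nat.card H1 := aux_os H1 v₂
  have e3 : Nat.card (orbit K v₃) = Nat.card K := by
    have := aux_os K v₃
    rwa [hKbot, Subgroup.card_bot, mul_one] at this
  have etot : Nat.card (orbit G v₁) * (Nat.card (orbit H1 v₂) * Nat.card (orbit K v₃))
      = 2 * p * q := by rw [e3, e2, e1]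
  have hqdvd : q ∣ Nat.card (orbit G v₁) * (Nat.card (orbit H1 v₂) * Nat.card (orbit K v₃)) :=
    ⟨2 * p, by rw [etot]; ring⟩
  -- orbit inclusions
  have hsub2 : orbit H1 v₂ ⊆ orbit G v₂ := by
    rintro x ⟨h, rfl⟩
    exact mem_orbit v₂ (h : G)
  have hsub3 : orbit K v₃ ⊆ orbit G v₃ := by
    rintro x ⟨k, rfl⟩
    exact mem_orbit v₃ ((k : H1) : G)
  haveI : Nonempty (orbit G v₁) := ⟨⟨v₁, mem_orbit_self v₁⟩⟩
  haveI : Nonempty (orbit H1 v₂) := ⟨⟨v₂, mem_orbit_self v₂⟩⟩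
  haveI : Nonempty (orbit K v₃) := ⟨⟨v₃, mem_orbit_self v₃⟩⟩
  rcases (hq.dvd_mul).mp hqdvd with h | h
  · refine ⟨v₁, stepB p q hp hq hop hoq hlt hcard v₁ v₂ v₃ hB hmin v₁ ?_⟩
    exact Nat.le_of_dvd Nat.card_pos h
  · rcases (hq.dvd_mul).mp h with h' | h'
    · refine ⟨v₂, stepB p q hp hq hop hoq hlt hcard v₁ v₂ v₃ hB hmin v₂ ?_⟩
      calc q ≤ Nat.card (orbit H1 v₂) := Nat.le_of_dvd Nat.card_pos h'
        _ ≤ Nat.card (orbit G v₂) := Nat.card_mono (Set.toFinite _) hsub2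
    · refine ⟨v₃, stepB p q hp hq hop hoq hlt hcard v₁ v₂ v₃ hB hmin v₃ ?_⟩
      calc q ≤ Nat.card (orbit K v₃) := Nat.le_of_dvd Nat.card_pos h'
        _ ≤ Nat.card (orbit G v₃) := Nat.card_mono (Set.toFinite _) hsub3
end
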